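/- arXiv:2011.00684 — 2 statements merged into one kernel-verified Lean document; each statement's English description precedes it below -/
import Mathlib

section
/- Let $F(E) = \sum_{n=1}^{N} \frac{p_n}{u_n - E}$ with $p_n > 0$ and real numbers $u_1 < \dots < u_N$, and let $\alpha < \beta$ be real numbers. Then the Lebesgue measure of the set $\{E \in \mathbb{R} : \alpha \le E + F(E) \le \beta\}$ (where $F$ is defined, i.e. $E \ne u_n$) equals $\beta - \alpha$. -/
open MeasureTheory Polynomial Finset Filter Set Topology

namespace BooleAux

variable {N : ℕ}





noncomputable def G (p u : Fin N → ℝ) (E : ℝ) : ℝ := E + ∑ n, p n / (u n - E)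

def S (u : Fin N → ℝ) (k : Fin (N + 1)) : Set ℝ :=
  {E | (∀ n : Fin N, (n : ℕ) < (k : ℕ) → u n < E) ∧ ∀ n : Fin N, (k : ℕ) ≤ (n : ℕ) → E < u n}

theorem ne_of_mem_S {u : Fin N → ℝ} {k} {E} (h : E ∈ S u k) : ∀ n, E ≠ u n := by
  intro n
  rcases lt_or_ge (n : ℕ) (k : ℕ) with hn | hn
  · exact (h.1 n hn).ne'
  · exact (h.2 n hn).ne

theorem Icc_subset_S {u : Fin N → ℝ} {k} {x y : ℝ} (hx : x ∈ S u k) (hy : y ∈ S u k) :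
    Set.Icc x y ⊆ S u k := fun z hz =>
  ⟨fun n hn => lt_of_lt_of_le (hx.1 n hn) hz.1, fun n hn => lt_of_le_of_lt hz.2 (hy.2 n hn)⟩

theorem prod_pos_S {u : Fin N → ℝ} {k} {a b : ℝ} (ha : a ∈ S u k) (hb : b ∈ S u k) (n : Fin N) :
    0 < (u n - a) * (u n - b) := by
  rcases lt_or_ge (n : ℕ) (k : ℕ) with hn | hn
  · have h1 := ha.1 n hn; have h2 := hb.1 n hn
    nlinarith
  · have h1 := ha.2 n hn; have h2 := hb.2 n hn
    nlinarith

theorem strictMonoOn_G {p u : Fin N → ℝ} (hp : ∀ n, 0 < p n) (k) :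
    StrictMonoOn (G p u) (S u k) := by
  intro a ha b hb hab
  have key : ∀ n : Fin N, p n / (u n - a) ≤ p n / (u n - b) := by
    intro n
    have hprod := prod_pos_S ha hb n
    have h1 : u n - a ≠ 0 := sub_ne_zero.2 (Ne.symm (ne_of_mem_S ha n))
    have h2 : u n - b ≠ 0 := sub_ne_zero.2 (Ne.symm (ne_of_mem_S hb n))
    have hdiff : p n / (u n - b) - p n / (u n - a) = p n * (b - a) / ((u n - a) * (u n - b)) := by
      field_simp; ring
    have : 0 ≤ p n * (b - a) / ((u n - a) * (u n - b)) :=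
      div_nonneg (mul_nonneg (hp n).le (by linarith)) hprod.le
    linarith
  have hsum : ∑ n, p n / (u n - a) ≤ ∑ n, p n / (u n - b) :=
    Finset.sum_le_sum fun n _ => key n
  simp only [G]
  linarith

theorem contOn_G {p u : Fin N → ℝ} : ContinuousOn (G p u) {E | ∀ n, E ≠ u n} := by
  apply ContinuousOn.add (continuousOn_id' _)
  apply continuousOn_finset_sum
  intro n _
  exact continuousOn_const.div (continuousOn_const.sub (continuousOn_id' _))
    fun E hE => sub_ne_zero.2 (Ne.symm (hE n))


theorem exists_lt_G {p u : Fin N → ℝ} (hp : ∀ n, 0 < p n) (hu : StrictMono u)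
    (k : Fin (N + 1)) (c : ℝ) : ∃ x ∈ S u k, G p u x < c := by
  rcases Nat.eq_zero_or_pos (k : ℕ) with hk | hk
  · -- along atBot
    have hsum : Tendsto (fun E : ℝ => ∑ n, p n / (u n - E)) atBot (𝓝 0) := by
      have h0 : ∀ n : Fin N, Tendsto (fun E : ℝ => p n / (u n - E)) atBot (𝓝 0) := by
        intro n
        apply Tendsto.div_atTop (tendsto_const_nhds)
        have : Tendsto (fun E : ℝ => -E) atBot atTop := tendsto_neg_atBot_atTop
        exact (tendsto_atTop_add_const_left atBot (u n) this).congr fun E => by ring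
      simpa using tendsto_finset_sum Finset.univ (fun n _ => h0 n)
    have hG : Tendsto (G p u) atBot atBot := by
      show Tendsto (fun E : ℝ => E + ∑ n, p n / (u n - E)) atBot atBot
      exact tendsto_atBot_add_right_of_ge' _ (1 : ℝ) tendsto_id
        (hsum.eventually_le_const one_pos)
    have hmem : ∀ᶠ E in (atBot : Filter ℝ), E ∈ S u k := by
      have h2 : ∀ᶠ E in (atBot : Filter ℝ), ∀ n : Fin N, E < u n := by
        rw [Filter.eventually_all]
        exact fun n => eventually_lt_atBot (u n)
      filter_upwards [h2] with E hE
      exact ⟨fun n hn => absurd hn (by omega), fun n _ => hE n⟩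
    obtain ⟨x, hx1, hx2⟩ := ((hG.eventually (eventually_lt_atBot c)).and hmem).exists
    exact ⟨x, hx2, hx1⟩
  · -- along 𝓝[>] u n₀ with n₀ = k - 1
    have hkN : (k : ℕ) - 1 < N := by omega
    set n₀ : Fin N := ⟨(k : ℕ) - 1, hkN⟩ with hn₀
    set F := 𝓝[>] (u n₀) with hF
    have hmem : ∀ᶠ E in F, E ∈ S u k := by
      have h1 : ∀ᶠ E in F, ∀ n : Fin N, (n : ℕ) < (k : ℕ) → u n < E := by
        filter_upwards [self_mem_nhdsWithin] with E hE n hn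
        have : u n ≤ u n₀ := hu.monotone (by simp [hn₀, Fin.le_def]; omega)
        exact lt_of_le_of_lt this hE
      have h2 : ∀ᶠ E in F, ∀ n : Fin N, (k : ℕ) ≤ (n : ℕ) → E < u n := by
        rw [Filter.eventually_all]
        intro n
        by_cases hn : (k : ℕ) ≤ (n : ℕ)
        · have hlt : u n₀ < u n := hu (by simp [hn₀, Fin.lt_def]; omega)
          filter_upwards [mem_nhdsWithin_of_mem_nhds (Iio_mem_nhds hlt)] with E hE
          exact fun _ => hE
        · filter_upwards with E h; exact absurd h hn
      filter_upwards [h1, h2] with E hE1 hE2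
      exact ⟨hE1, hE2⟩
    have hA : Tendsto (fun E : ℝ => p n₀ / (u n₀ - E)) F atBot := by
      have hsub : Tendsto (fun E : ℝ => E - u n₀) F (𝓝[>] 0) := by
        rw [tendsto_nhdsWithin_iff]
        constructor
        · have h : Tendsto (fun E : ℝ => E - u n₀) (𝓝 (u n₀)) (𝓝 (u n₀ - u n₀)) :=
            (continuous_id.sub continuous_const).tendsto (u n₀)
          rw [sub_self] at h
          exact h.mono_left nhdsWithin_le_nhds
        · filter_upwards [self_mem_nhdsWithin] with E hE
          exact sub_pos.2 (Set.mem_Ioi.1 hE)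
      have hinv : Tendsto (fun E : ℝ => p n₀ * (E - u n₀)⁻¹) F atTop :=
        (tendsto_inv_nhdsGT_zero.comp hsub).const_mul_atTop (hp n₀)
      have heq : (fun E : ℝ => p n₀ / (u n₀ - E)) = fun E => -(p n₀ * (E - u n₀)⁻¹) := by
        funext E
        rw [← neg_sub E (u n₀), div_neg, div_eq_mul_inv]
      rw [heq]
      exact tendsto_neg_atTop_atBot.comp hinv
    have hB : Tendsto (fun E : ℝ => E + ∑ n ∈ Finset.univ.erase n₀, p n / (u n - E)) F
        (𝓝 (u n₀ + ∑ n ∈ Finset.univ.erase n₀, p n / (u n - u n₀))) := by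
      apply Tendsto.mono_left _ nhdsWithin_le_nhds
      have hterm : ∀ n ∈ Finset.univ.erase n₀,
          Tendsto (fun E : ℝ => p n / (u n - E)) (𝓝 (u n₀)) (𝓝 (p n / (u n - u n₀))) := by
        intro n hn
        have hne : u n - u n₀ ≠ 0 :=
          sub_ne_zero.2 (fun h => (Finset.mem_erase.1 hn).1 (hu.injective h))
        exact ContinuousAt.div continuousAt_const
          (continuousAt_const.sub continuousAt_id) hne
      exact Tendsto.add (by exact tendsto_id)
        (tendsto_finset_sum _ hterm)
    have hG : Tendsto (G p u) F atBot := by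
      have heq : G p u = fun E => (p n₀ / (u n₀ - E)) +
          (E + ∑ n ∈ Finset.univ.erase n₀, p n / (u n - E)) := by
        funext E
        simp only [G]
        rw [← Finset.add_sum_erase Finset.univ _ (Finset.mem_univ n₀)]
        ring
      rw [heq]
      exact tendsto_atBot_add_right_of_ge' _ _ hA (hB.eventually_le_const (lt_add_one _))
    obtain ⟨x, hx1, hx2⟩ := ((hG.eventually (eventually_lt_atBot c)).and hmem).exists
    exact ⟨x, hx2, hx1⟩


theorem exists_gt_G {p u : Fin N → ℝ} (hp : ∀ n, 0 < p n) (hu : StrictMono u)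
    (k : Fin (N + 1)) (c : ℝ) : ∃ x ∈ S u k, c < G p u x := by
  rcases Nat.lt_or_ge (k : ℕ) N with hk | hk
  · -- along 𝓝[<] u n₀ with n₀ = k
    set n₀ : Fin N := ⟨(k : ℕ), hk⟩ with hn₀
    set F := 𝓝[<] (u n₀) with hF
    have hmem : ∀ᶠ E in F, E ∈ S u k := by
      have h2 : ∀ᶠ E in F, ∀ n : Fin N, (k : ℕ) ≤ (n : ℕ) → E < u n := by
        filter_upwards [self_mem_nhdsWithin] with E hE n hn
        have : u n₀ ≤ u n := hu.monotone (by simp [hn₀, Fin.le_def]; omega)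
        exact lt_of_lt_of_le hE this
      have h1 : ∀ᶠ E in F, ∀ n : Fin N, (n : ℕ) < (k : ℕ) → u n < E := by
        rw [Filter.eventually_all]
        intro n
        by_cases hn : (n : ℕ) < (k : ℕ)
        · have hlt : u n < u n₀ := hu (by simp [hn₀, Fin.lt_def]; omega)
          filter_upwards [mem_nhdsWithin_of_mem_nhds (Ioi_mem_nhds hlt)] with E hE
          exact fun _ => hE
        · filter_upwards with E h; exact absurd h hn
      filter_upwards [h1, h2] with E hE1 hE2
      exact ⟨hE1, hE2⟩
    have hA : Tendsto (fun E : ℝ => p n₀ / (u n₀ - E)) F atTop := by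
      have hsub : Tendsto (fun E : ℝ => u n₀ - E) F (𝓝[>] 0) := by
        rw [tendsto_nhdsWithin_iff]
        constructor
        · have h : Tendsto (fun E : ℝ => u n₀ - E) (𝓝 (u n₀)) (𝓝 (u n₀ - u n₀)) :=
            (continuous_const.sub continuous_id).tendsto (u n₀)
          rw [sub_self] at h
          exact h.mono_left nhdsWithin_le_nhds
        · filter_upwards [self_mem_nhdsWithin] with E hE
          rw [Set.mem_Iio] at hE
          exact sub_pos.2 hE
      have hinv : Tendsto (fun E : ℝ => p n₀ * (u n₀ - E)⁻¹) F atTop :=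
        (tendsto_inv_nhdsGT_zero.comp hsub).const_mul_atTop (hp n₀)
      simpa [div_eq_mul_inv] using hinv
    have hB : Tendsto (fun E : ℝ => E + ∑ n ∈ Finset.univ.erase n₀, p n / (u n - E)) F
        (𝓝 (u n₀ + ∑ n ∈ Finset.univ.erase n₀, p n / (u n - u n₀))) := by
      apply Tendsto.mono_left _ nhdsWithin_le_nhds
      have hterm : ∀ n ∈ Finset.univ.erase n₀,
          Tendsto (fun E : ℝ => p n / (u n - E)) (𝓝 (u n₀)) (𝓝 (p n / (u n - u n₀))) := by
        intro n hn
        have hne : u n - u n₀ ≠ 0 :=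
          sub_ne_zero.2 (fun h => (Finset.mem_erase.1 hn).1 (hu.injective h))
        exact ContinuousAt.div continuousAt_const
          (continuousAt_const.sub continuousAt_id) hne
      exact Tendsto.add (by exact tendsto_id)
        (tendsto_finset_sum _ hterm)
    have hG : Tendsto (G p u) F atTop := by
      have heq : G p u = fun E => (p n₀ / (u n₀ - E)) +
          (E + ∑ n ∈ Finset.univ.erase n₀, p n / (u n - E)) := by
        funext E
        simp only [G]
        rw [← Finset.add_sum_erase Finset.univ _ (Finset.mem_univ n₀)]
        ring
      rw [heq]
      exact tendsto_atTop_add_right_of_le' _ _ hA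
        (hB.eventually_const_le (sub_one_lt _))
    obtain ⟨x, hx1, hx2⟩ := ((hG.eventually (eventually_gt_atTop c)).and hmem).exists
    exact ⟨x, hx2, hx1⟩
  · -- k = N, along atTop
    have hsum : Tendsto (fun E : ℝ => ∑ n, p n / (u n - E)) atTop (𝓝 0) := by
      have h0 : ∀ n : Fin N, Tendsto (fun E : ℝ => p n / (u n - E)) atTop (𝓝 0) := by
        intro n
        have h1 : Tendsto (fun E : ℝ => E - u n) atTop atTop := by
          simpa [sub_eq_add_neg] using
            tendsto_atTop_add_const_right atTop (-(u n)) (tendsto_id (α := ℝ))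
        have h2 : Tendsto (fun E : ℝ => p n / (E - u n)) atTop (𝓝 0) :=
          Tendsto.div_atTop tendsto_const_nhds h1
        have h3 : (fun E : ℝ => p n / (u n - E)) = fun E => -(p n / (E - u n)) := by
          funext E; rw [← neg_sub E (u n), div_neg]
        rw [h3]
        simpa using h2.neg
      simpa using tendsto_finset_sum Finset.univ (fun n _ => h0 n)
    have hG : Tendsto (G p u) atTop atTop := by
      show Tendsto (fun E : ℝ => E + ∑ n, p n / (u n - E)) atTop atTop
      exact tendsto_atTop_add_right_of_le' _ (-1 : ℝ) tendsto_id
        (hsum.eventually_const_le (by norm_num))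
    have hmem : ∀ᶠ E in (atTop : Filter ℝ), E ∈ S u k := by
      have h2 : ∀ᶠ E in (atTop : Filter ℝ), ∀ n : Fin N, u n < E := by
        rw [Filter.eventually_all]
        exact fun n => eventually_gt_atTop (u n)
      filter_upwards [h2] with E hE
      exact ⟨fun n _ => hE n, fun n hn => absurd hn (by have := n.isLt; omega)⟩
    obtain ⟨x, hx1, hx2⟩ := ((hG.eventually (eventually_gt_atTop c)).and hmem).exists
    exact ⟨x, hx2, hx1⟩


theorem exists_root_G {p u : Fin N → ℝ} (hp : ∀ n, 0 < p n) (hu : StrictMono u)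
    (k : Fin (N + 1)) (c : ℝ) : ∃ x, x ∈ S u k ∧ G p u x = c := by
  obtain ⟨x, hxS, hx⟩ := exists_lt_G hp hu k c
  obtain ⟨y, hyS, hy⟩ := exists_gt_G hp hu k c
  have hxy : x ≤ y := by
    by_contra h
    push_neg at h
    exact absurd (strictMonoOn_G hp k hyS hxS h) (by linarith)
  have hIcc : Set.Icc x y ⊆ S u k := Icc_subset_S hxS hyS
  have hcont : ContinuousOn (G p u) (Set.Icc x y) :=
    contOn_G.mono (fun z hz => ne_of_mem_S (hIcc hz))
  have := intermediate_value_Icc hxy hcont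
  obtain ⟨z, hz, hzc⟩ := this ⟨hx.le, hy.le⟩
  exact ⟨z, hIcc hz, hzc⟩

theorem S_disjoint_aux {u : Fin N → ℝ} {k l : Fin (N + 1)} (h : (k : ℕ) < (l : ℕ)) :
    Disjoint (S u k) (S u l) := by
  rw [Set.disjoint_left]
  intro E hEk hEl
  have hkN : (k : ℕ) < N := by have := l.isLt; omega
  have h1 := hEl.1 ⟨k, hkN⟩ h
  have h2 := hEk.2 ⟨k, hkN⟩ (le_refl _)
  exact absurd h1 (by linarith)

theorem S_disjoint {u : Fin N → ℝ} {k l : Fin (N + 1)} (h : k ≠ l) :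
    Disjoint (S u k) (S u l) := by
  rcases lt_or_gt_of_ne (fun hh : (k : ℕ) = (l : ℕ) => h (Fin.ext hh)) with hh | hh
  · exact S_disjoint_aux hh
  · exact (S_disjoint_aux hh).symm

theorem mem_S_of_ne {u : Fin N → ℝ} (hu : StrictMono u) {E : ℝ} (hne : ∀ n, E ≠ u n) :
    ∃ k, E ∈ S u k := by
  classical
  set s := Finset.univ.filter (fun n : Fin N => u n < E) with hs
  have hcard : s.card ≤ N := le_trans (Finset.card_filter_le _ _) (by simp)
  refine ⟨⟨s.card, Nat.lt_succ_of_le hcard⟩, fun n hn => ?_, fun n hn => ?_⟩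
  · -- (n : ℕ) < s.card → u n < E
    by_contra h
    push_neg at h
    have hEn : E < u n := lt_of_le_of_ne h (hne n)
    have hsub : s ⊆ Finset.Iio n := by
      intro m hm
      rw [hs, Finset.mem_filter] at hm
      rw [Finset.mem_Iio]
      by_contra hmn
      push_neg at hmn
      exact absurd hm.2 (by have := hu.monotone hmn; linarith)
    have := Finset.card_le_card hsub
    rw [Fin.card_Iio] at this
    simp at hn
    omega
  · -- s.card ≤ (n : ℕ) → E < u n
    rcases lt_or_gt_of_ne (hne n) with h | h
    · exact h
    · exfalso
      have hsub : Finset.Iic n ⊆ s := by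
        intro m hm
        rw [Finset.mem_Iic] at hm
        rw [hs, Finset.mem_filter]
        exact ⟨Finset.mem_univ _, lt_of_le_of_lt (hu.monotone hm) h⟩
      have := Finset.card_le_card hsub
      rw [Fin.card_Iic] at this
      simp at hn
      omega


theorem sum_roots_G {p u : Fin N → ℝ} (hu : StrictMono u) (t : ℝ)
    (r : Fin (N + 1) → ℝ) (hrinj : Function.Injective r)
    (hru : ∀ k n, r k ≠ u n) (hrG : ∀ k, G p u (r k) = t) :
    ∑ k, r k = t + ∑ n, u n := by
  classical
  set A : ℝ[X] := (X - C t) * ∏ n, (X - C (u n)) with hA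
  set B : ℝ[X] := ∑ n, C (p n) * ∏ m ∈ Finset.univ.erase n, (X - C (u m)) with hB
  set P : ℝ[X] := A - B with hP
  have hmonprod : (∏ n, (X - C (u n)) : ℝ[X]).Monic :=
    monic_prod_of_monic _ _ fun n _ => monic_X_sub_C _
  have hmonA : A.Monic := (monic_X_sub_C t).mul hmonprod
  have hdegprod : (∏ n, (X - C (u n)) : ℝ[X]).natDegree = N := by
    rw [natDegree_prod _ _ fun n _ => X_sub_C_ne_zero _]
    simp
  have hdegA : A.natDegree = N + 1 := by
    rw [hA, (monic_X_sub_C t).natDegree_mul hmonprod, natDegree_X_sub_C, hdegprod]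
    omega
  have hQdeg : ∀ n : Fin N,
      (C (p n) * ∏ m ∈ Finset.univ.erase n, (X - C (u m)) : ℝ[X]).natDegree < N := by
    intro n
    have h1 : (∏ m ∈ Finset.univ.erase n, (X - C (u m)) : ℝ[X]).natDegree = N - 1 := by
      rw [natDegree_prod _ _ fun m _ => X_sub_C_ne_zero _]
      simp [Finset.card_erase_of_mem]
    calc (C (p n) * ∏ m ∈ Finset.univ.erase n, (X - C (u m)) : ℝ[X]).natDegree
        ≤ (C (p n) : ℝ[X]).natDegree
          + (∏ m ∈ Finset.univ.erase n, (X - C (u m)) : ℝ[X]).natDegree := natDegree_mul_le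
      _ < N := by rw [natDegree_C, h1]; have := n.isLt; omega
  have hdegB : B.natDegree ≤ N := by
    apply natDegree_sum_le_of_forall_le
    exact fun n _ => (hQdeg n).le
  have hcoeffB : B.coeff (N + 1 - 1) = 0 := by
    rw [hB, finset_sum_coeff]
    apply Finset.sum_eq_zero
    intro n _
    exact coeff_eq_zero_of_natDegree_lt (by have := hQdeg n; omega)
  have hdegBlt : B.degree < ((N + 1 : ℕ) : WithBot ℕ) :=
    lt_of_le_of_lt degree_le_natDegree (by exact_mod_cast Nat.lt_succ_of_le hdegB)
  have hmonP : P.Monic := by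
    rw [hP, sub_eq_add_neg]
    apply hmonA.add_of_left
    rwa [degree_neg, degree_eq_natDegree hmonA.ne_zero, hdegA]
  have hdegP : P.natDegree = N + 1 := by
    rw [hP, natDegree_sub_eq_left_of_natDegree_lt (by rw [hdegA]; omega), hdegA]
  -- each r k is a root of P
  have hroot : ∀ k, P.IsRoot (r k) := by
    intro k
    have hne : ∀ n, r k - u n ≠ 0 := fun n => sub_ne_zero.2 (hru k n)
    have hG := hrG k
    simp only [G] at hG
    have hsum : ∑ n, p n / (r k - u n) = r k - t := by
      have h1 : ∀ n ∈ Finset.univ, p n / (r k - u n) = -(p n / (u n - r k)) := by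
        intro n _
        rw [← neg_sub (u n) (r k), div_neg]
      rw [Finset.sum_congr rfl h1, Finset.sum_neg_distrib]
      linarith
    simp only [IsRoot, hP, hA, hB, eval_sub, eval_mul, eval_prod, eval_finset_sum,
      eval_X, eval_C]
    have h2 : ∀ n ∈ Finset.univ, p n * ∏ m ∈ Finset.univ.erase n, (r k - u m)
        = p n / (r k - u n) * ∏ m, (r k - u m) := by
      intro n _
      rw [div_mul_eq_mul_div, ← Finset.prod_erase_mul Finset.univ _ (Finset.mem_univ n),
        ← mul_assoc, mul_div_assoc, div_self (hne n), mul_one]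
    rw [Finset.sum_congr rfl h2, ← Finset.sum_mul, hsum]
    ring
  -- factorization
  have hPne : P ≠ 0 := hmonP.ne_zero
  set M : Multiset ℝ := Multiset.map r Finset.univ.val with hM
  have hnodup : M.Nodup := Multiset.Nodup.map hrinj Finset.univ.nodup
  have hMle : M ≤ P.roots := by
    rw [Multiset.le_iff_count]
    intro a
    by_cases ha : a ∈ M
    · rw [Multiset.count_eq_one_of_mem hnodup ha, count_roots]
      obtain ⟨k, _, rfl⟩ := Multiset.mem_map.1 ha
      exact (rootMultiplicity_pos hPne).2 (hroot k)
    · simp [Multiset.count_eq_zero_of_notMem ha]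
  have hdvd : (∏ k, (X - C (r k)) : ℝ[X]) ∣ P := by
    have := (Multiset.prod_X_sub_C_dvd_iff_le_roots hPne M).2 hMle
    have hprodM : (M.map fun a => (X : ℝ[X]) - C a).prod = ∏ k, (X - C (r k)) := by
      rw [hM, Multiset.map_map]
      rfl
    rwa [hprodM] at this
  set Q : ℝ[X] := ∏ k, (X - C (r k)) with hQ
  have hmonQ : Q.Monic := monic_prod_of_monic _ _ fun k _ => monic_X_sub_C _
  have hdegQ : Q.natDegree = N + 1 := by
    rw [hQ, natDegree_prod _ _ fun k _ => X_sub_C_ne_zero _]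
    simp
  have hPQ : P = Q := by
    obtain ⟨c, hc⟩ := hdvd
    have hcne : c ≠ 0 := by
      rintro rfl
      rw [mul_zero] at hc
      exact hPne hc
    have hdegc : c.natDegree = 0 := by
      have := natDegree_mul (hmonQ.ne_zero) hcne
      rw [← hc, hdegP, hdegQ] at this
      omega
    have hlc : c.leadingCoeff = 1 := by
      have h1 : P.leadingCoeff = Q.leadingCoeff * c.leadingCoeff := by
        rw [hc, leadingCoeff_mul]
      rw [hmonP.leadingCoeff, hmonQ.leadingCoeff, one_mul] at h1
      exact h1.symm
    have hc1 : c = 1 := by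
      rw [eq_C_of_natDegree_eq_zero hdegc]
      rw [leadingCoeff, hdegc] at hlc
      rw [hlc, map_one]
    rw [hc, hc1, mul_one]
  -- extract next coefficients
  have hnextQ : Q.nextCoeff = -∑ k, r k := prod_X_sub_C_nextCoeff r
  have hnextA : A.nextCoeff = -t + -∑ n, u n := by
    rw [hA, Monic.nextCoeff_mul (monic_X_sub_C t) hmonprod, nextCoeff_X_sub_C,
      prod_X_sub_C_nextCoeff]
  have hnextP : P.nextCoeff = -t + -∑ n, u n := by
    rw [nextCoeff_of_natDegree_pos (by rw [hdegP]; omega), hdegP]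
    rw [hP, coeff_sub, hcoeffB, sub_zero]
    rw [← hnextA, nextCoeff_of_natDegree_pos (by rw [hdegA]; omega), hdegA]
  rw [hPQ, hnextQ] at hnextP
  linarith

theorem lt_of_S_lt {u : Fin N → ℝ} {k l : Fin (N + 1)} (hkl : (k : ℕ) < (l : ℕ))
    {x y : ℝ} (hx : x ∈ S u k) (hy : y ∈ S u l) : x < y := by
  have hkN : (k : ℕ) < N := by have := l.isLt; omega
  have h1 := hx.2 ⟨k, hkN⟩ (le_refl _)
  have h2 := hy.1 ⟨k, hkN⟩ hkl
  linarith

end BooleAux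

open BooleAux

/-- Boole-type identity: the Lebesgue measure of
`{E : α ≤ E + F(E) ≤ β}` equals `β - α`, where
`F(E) = ∑ pₙ/(uₙ - E)`. -/
theorem stmt_1 (N : ℕ) (p u : Fin N → ℝ) (hp : ∀ n, 0 < p n)
    (hu : StrictMono u) (α β : ℝ) (hαβ : α < β) :
    volume {E : ℝ | (∀ n, E ≠ u n) ∧
      α ≤ E + ∑ n, p n / (u n - E) ∧
      E + ∑ n, p n / (u n - E) ≤ β} = ENNReal.ofReal (β - α) := by
  classical
  choose v hvS hvG using fun k => exists_root_G hp hu k α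
  choose w hwS hwG using fun k => exists_root_G hp hu k β
  have hmono := fun k => strictMonoOn_G (p := p) (u := u) hp k
  have hvw : ∀ k, v k ≤ w k := by
    intro k
    by_contra h
    push_neg at h
    have := hmono k (hwS k) (hvS k) h
    rw [hvG, hwG] at this
    linarith
  have hIccS : ∀ k, Set.Icc (v k) (w k) ⊆ S u k := fun k => Icc_subset_S (hvS k) (hwS k)
  have hset : {E : ℝ | (∀ n, E ≠ u n) ∧
      α ≤ E + ∑ n, p n / (u n - E) ∧ E + ∑ n, p n / (u n - E) ≤ β}
      = ⋃ k, Set.Icc (v k) (w k) := by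
    ext E
    simp only [Set.mem_setOf_eq, Set.mem_iUnion]
    constructor
    · rintro ⟨hne, h1, h2⟩
      obtain ⟨k, hk⟩ := mem_S_of_ne hu hne
      refine ⟨k, ?_, ?_⟩
      · by_contra h
        push_neg at h
        have hlt := hmono k hk (hvS k) h
        rw [hvG] at hlt
        simp only [G] at hlt
        linarith
      · by_contra h
        push_neg at h
        have hlt := hmono k (hwS k) hk h
        rw [hwG] at hlt
        simp only [G] at hlt
        linarith
    · rintro ⟨k, hE⟩
      have hES : E ∈ S u k := hIccS k hE
      refine ⟨ne_of_mem_S hES, ?_, ?_⟩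
      · have hle := (hmono k).monotoneOn (hvS k) hES hE.1
        rw [hvG] at hle
        simp only [G] at hle
        linarith
      · have hle := (hmono k).monotoneOn hES (hwS k) hE.2
        rw [hwG] at hle
        simp only [G] at hle
        linarith
  rw [hset]
  have hdisj : Pairwise (Function.onFun Disjoint fun k => Set.Icc (v k) (w k)) := by
    intro k l hkl
    exact Set.disjoint_of_subset (hIccS k) (hIccS l) (S_disjoint hkl)
  rw [measure_iUnion hdisj fun k => measurableSet_Icc]
  simp only [Real.volume_Icc]
  rw [tsum_fintype, ← ENNReal.ofReal_sum_of_nonneg (fun k _ => sub_nonneg.2 (hvw k))]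
  have hvinj : Function.Injective v := by
    intro k l h
    by_contra hne
    rcases lt_or_gt_of_ne (fun hh : (k : ℕ) = (l : ℕ) => hne (Fin.ext hh)) with hh | hh
    · exact absurd h (lt_of_S_lt hh (hvS k) (hvS l)).ne
    · exact absurd h.symm (lt_of_S_lt hh (hvS l) (hvS k)).ne
  have hwinj : Function.Injective w := by
    intro k l h
    by_contra hne
    rcases lt_or_gt_of_ne (fun hh : (k : ℕ) = (l : ℕ) => hne (Fin.ext hh)) with hh | hh
    · exact absurd h (lt_of_S_lt hh (hwS k) (hwS l)).ne
    · exact absurd h.symm (lt_of_S_lt hh (hwS l) (hwS k)).ne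
  have hsumv : ∑ k, v k = α + ∑ n, u n :=
    sum_roots_G hu α v hvinj (fun k n => ne_of_mem_S (hvS k) n) hvG
  have hsumw : ∑ k, w k = β + ∑ n, u n :=
    sum_roots_G hu β w hwinj (fun k n => ne_of_mem_S (hwS k) n) hwG
  congr 1
  rw [Finset.sum_sub_distrib, hsumv, hsumw]
  ring
end

section
/- Let $\mu$ be a finite Borel measure on $\mathbb{R}$ with Borel transform $F$ and $\alpha < \beta$ real. For $\eta > 0$ define $\phi_{\alpha,\beta}(z) = \mathrm{Im}\,\mathrm{Log}(z - \beta) - \mathrm{Im}\,\mathrm{Log}(z - \alpha)$ using the principal branch. Then $\lim_{\eta \to \infty} \eta\, \phi_{\alpha,\beta}(i\eta + F(i\eta)) = \beta - \alpha$. -/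
open MeasureTheory Filter Complex

lemma my_arg_im_pos {w : ℂ} (hw : 0 < w.im) :
    Complex.arg w = Real.pi / 2 - Real.arctan (w.re / w.im) := by
  set s : ℝ := w.re / w.im with hs
  have h1 : (0:ℝ) < 1 + s ^ 2 := by positivity
  have hsq : (0:ℝ) < Real.sqrt (1 + s ^ 2) := Real.sqrt_pos.2 h1
  have hθ : Real.pi / 2 - Real.arctan s ∈ Set.Ioc (-Real.pi) Real.pi := by
    have h2 := Real.arctan_lt_pi_div_two s
    have h3 := Real.neg_pi_div_two_lt_arctan s
    have h4 := Real.pi_pos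
    constructor <;> [skip; skip] <;> linarith
  have hr : (0:ℝ) < w.im * Real.sqrt (1 + s ^ 2) := by positivity
  have key : w = (↑(w.im * Real.sqrt (1 + s ^ 2)) : ℂ) *
      (Complex.cos (↑(Real.pi / 2 - Real.arctan s)) +
       Complex.sin (↑(Real.pi / 2 - Real.arctan s)) * Complex.I) := by
    rw [← Complex.ofReal_cos, ← Complex.ofReal_sin,
      Real.cos_pi_div_two_sub, Real.sin_pi_div_two_sub,
      Real.sin_arctan, Real.cos_arctan]
    apply Complex.ext <;>
      simp [Complex.mul_re, Complex.mul_im] <;>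
      field_simp [hs] <;> ring <;> rw [hs] <;> field_simp [hw.ne']
  rw [key, Complex.arg_mul_cos_add_sin_mul_I hr hθ]

lemma key_arctan {a : ℝ → ℝ} {L : ℝ} (ha : Tendsto a atTop (nhds 0))
    (hm : Tendsto (fun η => η * a η) atTop (nhds L)) :
    Tendsto (fun η => η * Real.arctan (a η)) atTop (nhds L) := by
  have hd := Real.hasDerivAt_arctan 0
  rw [hasDerivAt_iff_isLittleO] at hd
  have hd' : (fun x => Real.arctan x - x) =o[nhds (0:ℝ)] fun x => x := by
    simpa using hd
  have h2 : (fun η => Real.arctan (a η) - a η) =o[atTop] a := hd'.comp_tendsto ha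
  have h3 : (fun η => η * (Real.arctan (a η) - a η)) =o[atTop] (fun η => η * a η) :=
    (Asymptotics.isBigO_refl (fun η : ℝ => η) atTop).mul_isLittleO h2
  have h4 : (fun η => η * a η) =O[atTop] (fun _ => (1:ℝ)) := hm.isBigO_one ℝ
  have h5 : Tendsto (fun η => η * (Real.arctan (a η) - a η)) atTop (nhds 0) := by
    rw [← Asymptotics.isLittleO_one_iff ℝ]
    exact h3.trans_isBigO h4
  have := hm.add h5
  rw [add_zero] at this
  exact this.congr (fun η => by ring)

/-- With `F` the Borel transform of a finite Borel measure `μ` and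
`φ_{α,β}(z) = Im Log (z - β) - Im Log (z - α)` (principal branch),
`η · φ_{α,β}(iη + F(iη)) → β - α` as `η → ∞`. -/
theorem stmt_3 (μ : Measure ℝ) [IsFiniteMeasure μ] (α β : ℝ) (hαβ : α < β)
    (F : ℝ → ℂ) (hF : ∀ η : ℝ, 0 < η → F η = ∫ u : ℝ, ((u : ℂ) - I * η)⁻¹ ∂μ)
    (φ : ℂ → ℝ)
    (hφ : ∀ z : ℂ, φ z = (Complex.log (z - β)).im - (Complex.log (z - α)).im) :
    Tendsto (fun η : ℝ => η * φ (I * η + F η)) atTop (nhds (β - α)) := by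
  set M : ℝ := (μ Set.univ).toReal with hMdef
  have hM : 0 ≤ M := ENNReal.toReal_nonneg
  -- norm bound on F
  have hbound : ∀ η : ℝ, 0 < η → ‖F η‖ ≤ M / η := by
    intro η hη
    rw [hF η hη]
    have hb : ∀ u : ℝ, ‖((u:ℂ) - I * η)⁻¹‖ ≤ 1 / η := by
      intro u
      rw [norm_inv, one_div]
      apply inv_anti₀ hη
      have him3 : ((u:ℂ) - I * η).im = -η := by simp
      calc η = |((u:ℂ) - I * η).im| := by rw [him3, abs_neg, abs_of_pos hη]
        _ ≤ ‖(u:ℂ) - I * η‖ := Complex.abs_im_le_norm _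
        _ = ‖(u:ℂ) - I * η‖ := rfl
    calc ‖∫ u : ℝ, ((u:ℂ) - I * η)⁻¹ ∂μ‖ ≤ (1/η) * M :=
          norm_integral_le_of_norm_le_const (Eventually.of_forall hb)
      _ = M / η := by ring
  have hMη : Tendsto (fun η : ℝ => M / η) atTop (nhds 0) :=
    Tendsto.div_atTop tendsto_const_nhds tendsto_id
  have hF0 : Tendsto F atTop (nhds 0) := by
    apply squeeze_zero_norm' ?_ hMη
    filter_upwards [eventually_gt_atTop (0:ℝ)] with η hη using hbound η hη
  have hre : Tendsto (fun η => (F η).re) atTop (nhds 0) := by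
    have := (Complex.continuous_re.tendsto 0).comp hF0
    exact this
  have him : Tendsto (fun η => (F η).im) atTop (nhds 0) := by
    have := (Complex.continuous_im.tendsto 0).comp hF0
    exact this
  have hinv : Tendsto (fun η : ℝ => η⁻¹) atTop (nhds 0) := tendsto_inv_atTop_zero
  -- eventual positivity of im
  have hev : ∀ᶠ η : ℝ in atTop, 0 < η ∧ 0 < η + (F η).im := by
    filter_upwards [eventually_ge_atTop (M + 1)] with η hη
    have hη1 : (1:ℝ) ≤ η := by linarith
    have hη0 : 0 < η := by linarith
    have h1 : -(M / η) ≤ (F η).im := by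
      have := hbound η hη0
      have h2 : |(F η).im| ≤ ‖F η‖ := Complex.abs_im_le_norm _
      have := abs_le.1 (h2.trans this)
      linarith [this.1]
    have h3 : M / η ≤ M := div_le_self hM hη1
    exact ⟨hη0, by linarith⟩
  -- the key limit for each real c
  have hmain : ∀ c : ℝ, Tendsto
      (fun η => η * Real.arctan (((F η).re - c) / (η + (F η).im))) atTop (nhds (-c)) := by
    intro c
    set a : ℝ → ℝ := fun η => ((F η).re - c) / (η + (F η).im) with ha_def
    have hm : Tendsto (fun η => η * a η) atTop (nhds (-c)) := by
      have hden : Tendsto (fun η : ℝ => 1 + (F η).im * η⁻¹) atTop (nhds 1) := by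
        have := him.mul hinv
        rw [zero_mul] at this
        simpa using tendsto_const_nhds.add this
      have hnum : Tendsto (fun η => (F η).re - c) atTop (nhds (-c)) := by
        simpa using hre.sub (tendsto_const_nhds (x := c))
      have hq : Tendsto (fun η => ((F η).re - c) / (1 + (F η).im * η⁻¹)) atTop
          (nhds (-c)) := by
        have := hnum.div hden one_ne_zero
        rw [div_one] at this
        exact this
      apply hq.congr'
      filter_upwards [hev] with η ⟨hη0, hηim⟩
      have hne : η + (F η).im ≠ 0 := ne_of_gt hηim
      have hη : η ≠ 0 := ne_of_gt hη0
      simp only [ha_def]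
      field_simp
    have ha0 : Tendsto a atTop (nhds 0) := by
      have := hm.mul hinv
      rw [neg_mul, ← zero_mul (0:ℝ)] at this
      have h0 : Tendsto (fun η => η * a η * η⁻¹) atTop (nhds 0) := by
        simpa using hm.mul hinv
      apply h0.congr'
      filter_upwards [eventually_gt_atTop (0:ℝ)] with η hη
      field_simp
    exact key_arctan ha0 hm
  -- combine
  have hfin := (hmain α).sub (hmain β)
  have hlim : -α - -β = β - α := by ring
  rw [hlim] at hfin
  apply hfin.congr'
  filter_upwards [hev] with η ⟨hη0, hηim⟩
  have him2 : 0 < (I * ↑η + F η).im := by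
    simpa [add_comm] using hηim
  rw [hφ]
  have hα : (I * ↑η + F η - ↑α).im = η + (F η).im := by simp [add_comm]
  have hβ' : (I * ↑η + F η - ↑β).im = η + (F η).im := by simp [add_comm]
  have hαre : (I * ↑η + F η - ↑α).re = (F η).re - α := by simp
  have hβre : (I * ↑η + F η - ↑β).re = (F η).re - β := by simp
  rw [Complex.log_im, Complex.log_im,
    my_arg_im_pos (by rw [hβ']; exact hηim),
    my_arg_im_pos (by rw [hα]; exact hηim),
    hα, hβ', hαre, hβre]
  ring
end
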